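/- A generalized Vandermonde matrix with distinct positive real nodes has linearly independent columns: if ξ_1, ..., ξ_N are distinct positive reals and k_1 < k_2 < ... < k_N are distinct natural numbers, then the N×N matrix V with entries V_{ij} = ξ_i^{k_j} is invertible. -/

import Mathlib

open Polynomial Finset

/-- Positive roots of a nonzero real polynomial are fewer than the number of nonzero
coefficients. -/
lemma posRoots_card_lt_support_card :
    ∀ d : ℕ, ∀ p : ℝ[X], p.natDegree = d → p ≠ 0 →
      (p.roots.toFinset.filter fun x => 0 < x).card < p.support.card := by
  intro d
  induction d using Nat.strong_induction_on with
  | _ d ih =>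
  intro p hdeg hp
  -- factor out X ^ natTrailingDegree
  set m := p.natTrailingDegree with hm
  have hdvd : X ^ m ∣ p := by
    rw [X_pow_dvd_iff]
    intro e he
    exact coeff_eq_zero_of_lt_natTrailingDegree he
  obtain ⟨q, hq⟩ := hdvd
  have hq0 : q ≠ 0 := by rintro rfl; simp at hq; exact hp hq
  have hq00 : q.coeff 0 ≠ 0 := by
    have h2 : p.coeff m ≠ 0 := by
      simpa [trailingCoeff, hm] using trailingCoeff_nonzero_iff_nonzero.mpr hp
    have h1 : (X ^ m * q).coeff (0 + m) = q.coeff 0 := coeff_X_pow_mul q m 0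
    rw [zero_add] at h1
    rw [← h1, ← hq]
    exact h2
  -- supports have the same cardinality
  have hsupp : p.support.card = q.support.card := by
    have himg : p.support = q.support.image (· + m) := by
      ext n
      simp only [mem_support_iff, mem_image]
      constructor
      · intro hn
        have hmn : m ≤ n := by
          by_contra hlt
          push_neg at hlt
          exact hn (coeff_eq_zero_of_lt_natTrailingDegree hlt)
        refine ⟨n - m, ?_, by omega⟩
        rw [hq] at hn
        rwa [show n = (n - m) + m by omega, mul_comm, coeff_mul_X_pow q m (n - m)] at hn
      · rintro ⟨a, ha, rfl⟩
        rw [hq, mul_comm, coeff_mul_X_pow q m a]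
        exact ha
    rw [himg, Finset.card_image_of_injective _ (add_left_injective m)]
  -- positive roots coincide
  have hroots : (p.roots.toFinset.filter fun x => 0 < x)
      = (q.roots.toFinset.filter fun x => 0 < x) := by
    ext x
    simp only [Finset.mem_filter, Multiset.mem_toFinset, mem_roots hp, mem_roots hq0]
    constructor
    · rintro ⟨hx, hx0⟩
      refine ⟨?_, hx0⟩
      have := hx
      rw [hq] at this
      simp only [IsRoot, eval_mul, eval_pow, eval_X] at this
      rcases mul_eq_zero.mp this with h | h
      · exact absurd (pow_eq_zero_iff (by
          intro hm0
          simp [hm0] at h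
          ) |>.mp h) (ne_of_gt hx0)
      · exact h
    · rintro ⟨hx, hx0⟩
      refine ⟨?_, hx0⟩
      rw [hq]
      simp only [IsRoot, eval_mul, eval_pow, eval_X]
      exact mul_eq_zero.mpr (Or.inr hx)
  rw [hsupp, hroots]
  rcases eq_or_ne (derivative q) 0 with hq' | hq'
  · -- q is a nonzero constant: no roots at all
    have : q = C (q.coeff 0) := eq_C_of_natDegree_eq_zero (natDegree_eq_zero_of_derivative_eq_zero hq')
    have hnoroots : q.roots = 0 := by rw [this]; exact roots_C _
    rw [hnoroots]
    simp only [Multiset.toFinset_zero, Finset.filter_empty, Finset.card_empty]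
    exact Finset.card_pos.mpr ⟨0, mem_support_iff.mpr hq00⟩
  · -- Rolle step
    have hstep : (q.roots.toFinset.filter fun x => 0 < x).card ≤
        ((derivative q).roots.toFinset.filter fun x => 0 < x).card + 1 := by
      have := Finset.card_le_diff_of_interleaved
        (s := q.roots.toFinset.filter fun x => 0 < x)
        (t := (derivative q).roots.toFinset.filter fun x => 0 < x)
        (fun x hx y hy hxy _ => by
          simp only [Finset.mem_filter, Multiset.mem_toFinset, mem_roots hq0] at hx hy
          obtain ⟨z, hz1, hz2⟩ := exists_deriv_eq_zero hxy q.continuousOn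
            (hx.1.trans hy.1.symm)
          refine ⟨z, ?_, hz1.1, hz1.2⟩
          simp only [Finset.mem_filter, Multiset.mem_toFinset, mem_roots hq',
            IsRoot, ← q.deriv]
          exact ⟨hz2, lt_trans hx.2 hz1.1⟩)
      calc (q.roots.toFinset.filter fun x => 0 < x).card
          ≤ (((derivative q).roots.toFinset.filter fun x => 0 < x) \
              (q.roots.toFinset.filter fun x => 0 < x)).card + 1 := this
        _ ≤ ((derivative q).roots.toFinset.filter fun x => 0 < x).card + 1 :=
            Nat.add_le_add_right (Finset.card_mono Finset.sdiff_subset) _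
    -- support of derivative is strictly smaller
    have hsupp' : (derivative q).support.card < q.support.card := by
      have hsub : (derivative q).support.image (· + 1) ⊆ q.support.erase 0 := by
        intro n hn
        simp only [Finset.mem_image] at hn
        obtain ⟨a, ha, rfl⟩ := hn
        rw [mem_support_iff, coeff_derivative] at ha
        refine Finset.mem_erase.mpr ⟨by omega, mem_support_iff.mpr ?_⟩
        intro h
        rw [h] at ha
        simp at ha
      calc (derivative q).support.card
          = ((derivative q).support.image (· + 1)).card :=
            (Finset.card_image_of_injective _ (add_left_injective 1)).symm
        _ ≤ (q.support.erase 0).card := Finset.card_mono hsub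
        _ < q.support.card := Finset.card_erase_lt_of_mem
            (mem_support_iff.mpr hq00)
    -- apply IH to derivative q
    have hdq : (derivative q).natDegree < d := by
      have h1 : (derivative q).natDegree < q.natDegree := by
        refine natDegree_derivative_lt ?_
        intro h
        exact hq' (by rw [eq_C_of_natDegree_eq_zero h]; simp)
      have h2 : q.natDegree ≤ p.natDegree := by
        rw [hq]
        rcases eq_or_ne p 0 with rfl | _
        · exact absurd rfl hp
        · rw [natDegree_mul (pow_ne_zero m X_ne_zero) hq0, natDegree_X_pow]; omega
      omega
    have hIH := ih _ hdq (derivative q) rfl hq'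
    omega

/-- A generalized Vandermonde matrix with distinct positive real nodes `ξ_i` and strictly
increasing natural exponents `k_j` has nonzero determinant (linearly independent columns). -/
theorem generalized_vandermonde_det_ne_zero
    (N : ℕ) (ξ : Fin N → ℝ) (hpos : ∀ i, 0 < ξ i) (hinj : Function.Injective ξ)
    (k : Fin N → ℕ) (hk : StrictMono k) :
    (Matrix.of fun i j : Fin N => ξ i ^ k j).det ≠ 0 := by
  intro hdet
  obtain ⟨v, hv, hmul⟩ := (Matrix.exists_mulVec_eq_zero_iff).mpr hdet
  -- build the polynomial ∑ j, v j • X ^ k j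
  set p : ℝ[X] := ∑ j : Fin N, C (v j) * X ^ k j with hp
  have hpne : p ≠ 0 := by
    obtain ⟨j0, hj0⟩ := Function.ne_iff.mp hv
    intro h
    apply hj0
    have := congrArg (fun q => Polynomial.coeff q (k j0)) h
    simp only [hp, finset_sum_coeff, coeff_C_mul, coeff_X_pow, coeff_zero] at this
    rw [Finset.sum_eq_single j0 (fun b _ hb => by
        rw [if_neg (fun h => hb (hk.injective h.symm))]; ring) (by simp)] at this
    simpa using this
  -- every ξ i is a positive root of p
  have hroot : ∀ i, (ξ i) ∈ p.roots.toFinset.filter fun x => 0 < x := by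
    intro i
    have heval : p.eval (ξ i) = 0 := by
      have := congrFun hmul i
      simp only [Matrix.mulVec, dotProduct, Matrix.of_apply, Pi.zero_apply] at this
      rw [hp]
      simp only [eval_finset_sum, eval_mul, eval_C, eval_pow, eval_X]
      rw [← this]
      exact Finset.sum_congr rfl fun j _ => by ring
    simp only [Finset.mem_filter, Multiset.mem_toFinset, mem_roots hpne]
    exact ⟨heval, hpos i⟩
  -- positive roots ≥ N
  have hN : N ≤ (p.roots.toFinset.filter fun x => 0 < x).card := by
    have : (Finset.univ.image ξ) ⊆ p.roots.toFinset.filter fun x => 0 < x :=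
      fun x hx => by
        obtain ⟨i, _, rfl⟩ := Finset.mem_image.mp hx
        exact hroot i
    calc N = (Finset.univ : Finset (Fin N)).card := by simp
      _ = (Finset.univ.image ξ).card := (Finset.card_image_of_injective _ hinj).symm
      _ ≤ _ := Finset.card_mono this
  -- support ≤ N
  have hsupp : p.support.card ≤ N := by
    have : p.support ⊆ Finset.univ.image k := by
      intro n hn
      rw [mem_support_iff] at hn
      by_contra hnk
      apply hn
      rw [hp]
      simp only [finset_sum_coeff, coeff_C_mul, coeff_X_pow]
      refine Finset.sum_eq_zero fun j _ => ?_
      rw [if_neg, mul_zero]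
      intro h
      exact hnk (Finset.mem_image.mpr ⟨j, Finset.mem_univ j, h.symm⟩)
    calc p.support.card ≤ (Finset.univ.image k).card := Finset.card_mono this
      _ ≤ N := (Finset.card_image_le).trans (by simp)
  have := posRoots_card_lt_support_card p.natDegree p rfl hpne
  omega
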